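/- Let (b,c) be a connected graph over (X,m), let w be a critical and non-trivial Hardy weight with ground state v, and let u ∈ 𝓕 with u ≥ 0 be subharmonic such that u/v is bounded. Then u = 0. -/

import Mathlib

open Filter MeasureTheory Topology
open scoped ENNReal NNReal

noncomputable section

namespace HG

variable {X : Type*}

open scoped Classical

/-- `f` has finite support (membership in `C_c(X)`). -/
def FinSupp (f : X → ℝ) : Prop := (Function.support f).Finite

/-- Membership in `𝓕`. -/
def MemF (b : X → X → ℝ) (f : X → ℝ) : Prop :=
  ∀ x : X, Summable fun y => b x y * |f y|

/-- The formal Laplacian `𝓛`. -/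
def lap (b : X → X → ℝ) (c m : X → ℝ) (f : X → ℝ) (x : X) : ℝ :=
  (1 / m x) * ∑' y, b x y * (f x - f y) + (c x / m x) * f x

/-- The energy form `𝓠`, valued in `ℝ≥0∞`. -/
def energy (b : X → X → ℝ) (c : X → ℝ) (f : X → ℝ) : ℝ≥0∞ :=
  (1 / 2) * ∑' x, ∑' y, ENNReal.ofReal (b x y * (f x - f y) ^ 2)
    + ∑' x, ENNReal.ofReal (c x * f x ^ 2)

/-- Membership in `𝓓`, the functions of finite energy. -/
def MemD (b : X → X → ℝ) (c : X → ℝ) (f : X → ℝ) : Prop := energy b c f < ⊤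

/-- Membership in `𝓓₀`, the closure of `C_c(X)` w.r.t. `‖f‖_o = (𝓠(f)+f(o)²)^{1/2}`. -/
def MemD0 (b : X → X → ℝ) (c : X → ℝ) (o : X) (f : X → ℝ) : Prop :=
  ∃ φ : ℕ → X → ℝ, (∀ n, FinSupp (φ n)) ∧
    Tendsto (fun n => energy b c (fun x => f x - φ n x)
      + ENNReal.ofReal ((f o - φ n o) ^ 2)) atTop (nhds 0)

/-- `(b,c)` is a connected graph over `(X,m)`. -/
structure IsGraph (b : X → X → ℝ) (c m : X → ℝ) : Prop where
  symm : ∀ x y, b x y = b y x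
  nonneg : ∀ x y, 0 ≤ b x y
  loopless : ∀ x, b x x = 0
  deg_summable : ∀ x, Summable fun y => b x y
  c_nonneg : ∀ x, 0 ≤ c x
  m_pos : ∀ x, 0 < m x
  connected : ∀ x y : X, ∃ (k : ℕ) (p : ℕ → X), p 0 = x ∧ p k = y ∧
    ∀ i < k, 0 < b (p i) (p (i + 1))

/-- `u` is superharmonic: `u ∈ 𝓕` and `𝓛u ≥ 0`. -/
def Superharmonic (b : X → X → ℝ) (c m : X → ℝ) (u : X → ℝ) : Prop :=
  MemF b u ∧ ∀ x, 0 ≤ lap b c m u x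

/-- `u` is subharmonic: `u ∈ 𝓕` and `𝓛u ≤ 0`. -/
def Subharmonic (b : X → X → ℝ) (c m : X → ℝ) (u : X → ℝ) : Prop :=
  MemF b u ∧ ∀ x, lap b c m u x ≤ 0

/-- The Green operator `Gk(x) = ∑_y G(x,y) k(y)`. -/
def Gop (G : X → X → ℝ) (k : X → ℝ) (x : X) : ℝ := ∑' y, G x y * k y

/-- Membership in `𝓖`, the domain of the Green operator. -/
def MemG (G : X → X → ℝ) (k : X → ℝ) : Prop :=
  ∀ x, Summable fun y => G x y * |k y|

/-- `u` is a potential: `u ∈ 𝓕`, `𝓛u ∈ 𝓖` and `u = G𝓛u`. -/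
def IsPotential (b : X → X → ℝ) (c m : X → ℝ) (G : X → X → ℝ) (u : X → ℝ) : Prop :=
  MemF b u ∧ MemG G (lap b c m u) ∧ u = Gop G (lap b c m u)

/-- Membership in `𝓖₂ = {k ∈ 𝓖 : ∑_x m(x)|k(x)| (G|k|)(x) < ∞}`. -/
def MemG2 (m : X → ℝ) (G : X → X → ℝ) (k : X → ℝ) : Prop :=
  MemG G k ∧ Summable fun x => m x * |k x| * Gop G (fun y => |k y|) x

/-- `G` is the Green function of the (transient) graph `(b,c)` over `(X,m)`:
for every `y`, `G(·,y)` is the unique function in `𝓓₀ ∩ 𝓕` with `𝓛 G(·,y) = 1_y`;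
it is strictly positive and symmetric. -/
structure IsGreen (b : X → X → ℝ) (c m : X → ℝ) (o : X) (G : X → X → ℝ) : Prop where
  pos : ∀ x y, 0 < G x y
  symm : ∀ x y, G x y = G y x
  memF : ∀ y, MemF b fun x => G x y
  memD0 : ∀ y, MemD0 b c o fun x => G x y
  lap_eq : ∀ y x, lap b c m (fun z => G z y) x = if x = y then 1 else 0
  unique : ∀ (y : X) (u : X → ℝ), MemF b u → MemD0 b c o u →
    (∀ x, lap b c m u x = if x = y then 1 else 0) → u = fun x => G x y

/-- `w(φ) = ∑_x m(x) w(x) φ(x)²`. -/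
def wsum (m w φ : X → ℝ) : ℝ := ∑' x, m x * w x * φ x ^ 2

/-- `w` is a Hardy type weight: `𝓠(φ) ≥ ∑_x m(x) w(x) φ(x)²` for all `φ ∈ C_c(X)`. -/
def IsHardyType (b : X → X → ℝ) (c m w : X → ℝ) : Prop :=
  ∀ φ : X → ℝ, FinSupp φ → ENNReal.ofReal (wsum m w φ) ≤ energy b c φ

/-- `w` is a Hardy weight: a non-negative Hardy type weight. -/
def IsHardy (b : X → X → ℝ) (c m w : X → ℝ) : Prop :=
  (∀ x, 0 ≤ w x) ∧ IsHardyType b c m w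

/-- A Hardy weight is critical if the only Hardy weight above it is itself. -/
def IsCriticalHardy (b : X → X → ℝ) (c m w : X → ℝ) : Prop :=
  IsHardy b c m w ∧ ∀ w', IsHardy b c m w' → (∀ x, w x ≤ w' x) → w' = w

/-- A Hardy type weight is critical if the only Hardy type weight above it is itself. -/
def IsCriticalHardyType (b : X → X → ℝ) (c m w : X → ℝ) : Prop :=
  IsHardyType b c m w ∧ ∀ w', IsHardyType b c m w' → (∀ x, w x ≤ w' x) → w' = w

/-- A ground state of `w`: a strictly positive `v ∈ 𝓕` with `𝓛v = wv`. -/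
def IsGroundState (b : X → X → ℝ) (c m w v : X → ℝ) : Prop :=
  MemF b v ∧ (∀ x, 0 < v x) ∧ ∀ x, lap b c m v x = w x * v x

/-- A ground state of `w` obtained as pointwise limit of a null sequence. -/
def IsGroundStateSeq (b : X → X → ℝ) (c m w v : X → ℝ) : Prop :=
  IsGroundState b c m w v ∧
  ∃ e : ℕ → X → ℝ, (∀ n, FinSupp (e n)) ∧
    Tendsto (fun n => (energy b c (e n)).toReal - wsum m w (e n)) atTop (nhds 0) ∧
    ∀ x, Tendsto (fun n => e n x) atTop (nhds (v x))

/-- Membership in `C₀(X)`, functions vanishing at infinity. -/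
def MemC0 (f : X → ℝ) : Prop := ∀ ε : ℝ, 0 < ε → {x | ε ≤ |f x|}.Finite


private lemma pt_ineq {a a' s t : ℝ} (ha : 0 < a) (ha' : 0 < a') :
    (a - a') * (s ^ 2 / a - t ^ 2 / a') ≤ (s - t) ^ 2 := by
  have ha0 : a ≠ 0 := ha.ne'
  have ha'0 : a' ≠ 0 := ha'.ne'
  rw [← sub_nonneg]
  have h : (s - t) ^ 2 - (a - a') * (s ^ 2 / a - t ^ 2 / a')
      = (a * t - a' * s) ^ 2 / (a * a') := by
    field_simp
    ring
  rw [h]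
  positivity

private lemma ofReal_tsum_le {ι : Type*} {f : ι → ℝ} (hf : Summable f) :
    ENNReal.ofReal (∑' i, f i) ≤ ∑' i, ENNReal.ofReal (f i) := by
  have hmax : Summable fun i => max (f i) 0 :=
    Summable.of_nonneg_of_le (fun i => le_max_right _ _)
      (fun i => max_le (le_abs_self _) (abs_nonneg _)) hf.abs
  calc ENNReal.ofReal (∑' i, f i)
      ≤ ENNReal.ofReal (∑' i, max (f i) 0) :=
        ENNReal.ofReal_le_ofReal (Summable.tsum_le_tsum (fun i => le_max_left _ _) hf hmax)
    _ = ∑' i, ENNReal.ofReal (max (f i) 0) :=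
        ENNReal.ofReal_tsum_of_nonneg (fun i => le_max_right _ _) hmax
    _ = ∑' i, ENNReal.ofReal (f i) := by
        congr 1
        funext i
        rcases le_total (f i) 0 with h | h
        · rw [max_eq_right h, ENNReal.ofReal_zero,
            Eq.comm, ENNReal.ofReal_eq_zero]
          exact h
        · rw [max_eq_left h]

private lemma summable_mulF {X : Type*} {b : X → X → ℝ} {f : X → ℝ}
    (hb : ∀ x y, 0 ≤ b x y) (hf : MemF b f) (x : X) :
    Summable fun y => b x y * f y := by
  refine Summable.of_abs ((hf x).congr fun y => ?_)
  rw [abs_mul, abs_of_nonneg (hb x y)]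

private lemma summable_lapterm {X : Type*} {b : X → X → ℝ} {c m : X → ℝ}
    (hg : IsGraph b c m) {f : X → ℝ} (hf : MemF b f) (x : X) :
    Summable fun y => b x y * (f x - f y) := by
  have h1 : Summable fun y => b x y * f x := (hg.deg_summable x).mul_right _
  have h2 := summable_mulF hg.nonneg hf x
  exact (h1.sub h2).congr fun y => (mul_sub _ _ _).symm

set_option maxHeartbeats 2000000 in
private lemma isHardy_of_positive_solution {X : Type*} (b : X → X → ℝ) (c m : X → ℝ)
    (hg : IsGraph b c m) (v' w' : X → ℝ) (hmem : MemF b v') (hpos : ∀ x, 0 < v' x)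
    (hwn : ∀ x, 0 ≤ w' x) (hlap : ∀ x, lap b c m v' x = w' x * v' x) :
    IsHardy b c m w' := by
  refine ⟨hwn, fun φ hφ => ?_⟩
  classical
  set S : Finset X := hφ.toFinset with hSdef
  have hφ0 : ∀ x ∉ S, φ x = 0 := by
    intro x hx
    by_contra h
    exact hx ((Set.Finite.mem_toFinset (s := Function.support φ) hφ).mpr h)
  set g : X → ℝ := fun x => φ x ^ 2 / v' x with hgdef
  have hgzero : ∀ x ∉ S, g x = 0 := by
    intro x hx
    simp [hgdef, hφ0 x hx]
  -- pointwise identity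
  have hkey : ∀ x, m x * w' x * φ x ^ 2
      = g x * (∑' y, b x y * (v' x - v' y)) + c x * φ x ^ 2 := by
    intro x
    have hm : m x ≠ 0 := (hg.m_pos x).ne'
    have hvx : v' x ≠ 0 := (hpos x).ne'
    have h := hlap x
    simp only [lap] at h
    have hgv : g x * v' x = φ x ^ 2 := div_mul_cancel₀ _ hvx
    calc m x * w' x * φ x ^ 2
        = g x * (m x * (w' x * v' x)) := by rw [← hgv]; ring
      _ = g x * (m x * ((1 / m x) * (∑' y, b x y * (v' x - v' y))
            + (c x / m x) * v' x)) := by rw [← h]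
      _ = g x * (∑' y, b x y * (v' x - v' y)) + c x * (g x * v' x) := by
          field_simp
      _ = g x * (∑' y, b x y * (v' x - v' y)) + c x * φ x ^ 2 := by rw [hgv]
  have hwsum : wsum m w' φ
      = (∑ x ∈ S, g x * (∑' y, b x y * (v' x - v' y))) + ∑ x ∈ S, c x * φ x ^ 2 := by
    rw [wsum, tsum_eq_sum (s := S) (fun x hx => by rw [hφ0 x hx]; ring),
      ← Finset.sum_add_distrib]
    exact Finset.sum_congr rfl fun x _ => hkey x
  have hT : ∀ x, Summable fun y => b x y * (v' x - v' y) := summable_lapterm hg hmem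
  set F : X × X → ℝ := fun p => g p.1 * (b p.1 p.2 * (v' p.1 - v' p.2)) with hFdef
  have hFslice : ∀ x, Summable fun y => F (x, y) := fun x => (hT x).mul_left (g x)
  have hFabs : Summable fun p : X × X => |F p| := by
    rw [summable_prod_of_nonneg (Pi.le_def.mpr fun p => abs_nonneg _)]
    refine ⟨fun x => (hFslice x).abs, ?_⟩
    refine summable_of_ne_finset_zero (s := S) ?_
    intro x hx
    have h0 : ∀ y, F (x, y) = 0 := fun y => by simp [hFdef, hgzero x hx]
    simp [h0]
  have hFsum : Summable F := Summable.of_abs hFabs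
  have hFswap : Summable fun p : X × X => F p.swap :=
    ((Equiv.prodComm X X).summable_iff (f := F)).mpr hFsum
  have hswap_tsum : ∑' p : X × X, F p.swap = ∑' p, F p := by
    simpa using (Equiv.prodComm X X).tsum_eq F
  set D : X × X → ℝ := fun p => b p.1 p.2 * ((v' p.1 - v' p.2) * (g p.1 - g p.2))
    with hDdef
  have hDeq : ∀ p : X × X, D p = F p + F p.swap := by
    rintro ⟨x, y⟩
    simp only [hDdef, hFdef, Prod.swap_prod_mk]
    rw [hg.symm y x]
    ring
  have hDsum : Summable D := (hFsum.add hFswap).congr fun p => (hDeq p).symm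
  have hDtsum : ∑' p, D p = 2 * ∑' p, F p := by
    calc ∑' p, D p = ∑' p, (F p + F p.swap) := tsum_congr hDeq
      _ = (∑' p, F p) + ∑' p : X × X, F p.swap := Summable.tsum_add hFsum hFswap
      _ = 2 * ∑' p, F p := by rw [hswap_tsum]; ring
  have hA : ∑' p, F p = ∑ x ∈ S, g x * (∑' y, b x y * (v' x - v' y)) := by
    rw [Summable.tsum_prod' hFsum hFslice,
      tsum_eq_sum (s := S) (fun x hx => by
        have h0 : ∀ y, F (x, y) = 0 := fun y => by simp [hFdef, hgzero x hx]
        simp [h0])]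
    refine Finset.sum_congr rfl fun x _ => ?_
    simp only [hFdef]
    exact tsum_mul_left
  set E : X × X → ℝ := fun p => b p.1 p.2 * (φ p.1 - φ p.2) ^ 2 with hEdef
  have hDE : ∀ p, D p ≤ E p := by
    rintro ⟨x, y⟩
    simp only [hDdef, hEdef, hgdef]
    exact mul_le_mul_of_nonneg_left (pt_ineq (hpos x) (hpos y)) (hg.nonneg x y)
  have henergy : energy b c φ
      = (1 / 2) * (∑' p : X × X, ENNReal.ofReal (E p))
        + ∑' x, ENNReal.ofReal (c x * φ x ^ 2) := by
    rw [energy]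
    congr 1
    congr 1
    exact (ENNReal.tsum_prod' (f := fun p => ENNReal.ofReal (E p))).symm
  have hC : ENNReal.ofReal (∑ x ∈ S, c x * φ x ^ 2)
      ≤ ∑' x, ENNReal.ofReal (c x * φ x ^ 2) := by
    rw [ENNReal.ofReal_sum_of_nonneg (fun x _ => mul_nonneg (hg.c_nonneg x) (sq_nonneg _))]
    exact ENNReal.sum_le_tsum S
  have hhalf : ENNReal.ofReal (1 / 2 : ℝ) = 1 / 2 := by
    rw [ENNReal.ofReal_div_of_pos (by norm_num)]
    norm_num
  have hAbound : ENNReal.ofReal (∑ x ∈ S, g x * (∑' y, b x y * (v' x - v' y)))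
      ≤ (1 / 2) * ∑' p, ENNReal.ofReal (E p) := by
    have h1 : (∑ x ∈ S, g x * (∑' y, b x y * (v' x - v' y)))
        = (1 / 2 : ℝ) * ∑' p, D p := by
      rw [hDtsum, ← hA]; ring
    rw [h1, ENNReal.ofReal_mul (by norm_num : (0:ℝ) ≤ 1 / 2), hhalf]
    refine mul_le_mul_right ?_ _
    calc ENNReal.ofReal (∑' p, D p) ≤ ∑' p, ENNReal.ofReal (D p) := ofReal_tsum_le hDsum
      _ ≤ ∑' p, ENNReal.ofReal (E p) :=
          ENNReal.tsum_le_tsum fun p => ENNReal.ofReal_le_ofReal (hDE p)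
  calc ENNReal.ofReal (wsum m w' φ)
      = ENNReal.ofReal ((∑ x ∈ S, g x * (∑' y, b x y * (v' x - v' y)))
          + ∑ x ∈ S, c x * φ x ^ 2) := by rw [hwsum]
    _ ≤ ENNReal.ofReal (∑ x ∈ S, g x * (∑' y, b x y * (v' x - v' y)))
          + ENNReal.ofReal (∑ x ∈ S, c x * φ x ^ 2) := ENNReal.ofReal_add_le
    _ ≤ (1 / 2) * (∑' p : X × X, ENNReal.ofReal (E p))
          + ∑' x, ENNReal.ofReal (c x * φ x ^ 2) := add_le_add hAbound hC
    _ = energy b c φ := henergy.symm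

set_option maxHeartbeats 2000000 in
/-- Lemma 3.6. Let `w` be a critical non-trivial Hardy weight
with ground state `v`, and let `u ∈ 𝓕`, `u ≥ 0`, be subharmonic with `u/v`
bounded. Then `u = 0`. -/
theorem stmt13 {X : Type*} [Countable X] (b : X → X → ℝ) (c m : X → ℝ)
    (hg : IsGraph b c m)
    (w : X → ℝ) (hw : ∀ x, 0 ≤ w x) (hnt : w ≠ 0)
    (hcrit : IsCriticalHardy b c m w)
    (v : X → ℝ) (hv : IsGroundState b c m w v)
    (u : X → ℝ) (hu : Subharmonic b c m u) (hupos : ∀ x, 0 ≤ u x)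
    (hbdd : ∃ C : ℝ, ∀ x, u x / v x ≤ C) :
    u = 0 := by
  classical
  obtain ⟨C, hC⟩ := hbdd
  obtain ⟨hvF, hvpos, hvlap⟩ := hv
  obtain ⟨huF, hulap⟩ := hu
  set C' : ℝ := max C 1 with hC'def
  have hC'pos : 0 < C' := lt_of_lt_of_le one_pos (le_max_right _ _)
  have huv : ∀ x, u x ≤ C' * v x := by
    intro x
    have h1 : u x / v x ≤ C' := (hC x).trans (le_max_left _ _)
    calc u x = (u x / v x) * v x := by field_simp [(hvpos x).ne']
      _ ≤ C' * v x := mul_le_mul_of_nonneg_right h1 (hvpos x).le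
  set ε : ℝ := 1 / (2 * C') with hεdef
  have hεpos : 0 < ε := by positivity
  have hεC : ε * C' = 1 / 2 := by
    rw [hεdef]
    field_simp
  set v' : X → ℝ := fun x => v x - ε * u x with hv'def
  have hv'x : ∀ x, v' x = v x - ε * u x := fun x => rfl
  have hv'pos : ∀ x, 0 < v' x := by
    intro x
    have h1 : ε * u x ≤ ε * (C' * v x) := mul_le_mul_of_nonneg_left (huv x) hεpos.le
    have h2 : ε * (C' * v x) = (1 / 2) * v x := by rw [← mul_assoc, hεC]
    have h3 := hvpos x
    rw [hv'x]
    nlinarith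
  have hv'F : MemF b v' := by
    intro x
    refine Summable.of_nonneg_of_le (fun y => mul_nonneg (hg.nonneg x y) (abs_nonneg _))
      (fun y => ?_) ((hvF x).add ((huF x).mul_left ε))
    have h1 : |v' y| ≤ |v y| + ε * |u y| := by
      rw [hv'x]
      calc |v y - ε * u y| ≤ |v y| + |ε * u y| := abs_sub _ _
        _ = |v y| + ε * |u y| := by rw [abs_mul, abs_of_pos hεpos]
    calc b x y * |v' y| ≤ b x y * (|v y| + ε * |u y|) :=
        mul_le_mul_of_nonneg_left h1 (hg.nonneg x y)
      _ = b x y * |v y| + ε * (b x y * |u y|) := by ring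
  have hlapv' : ∀ x, lap b c m v' x = lap b c m v x - ε * lap b c m u x := by
    intro x
    have h1 := summable_lapterm hg hvF x
    have h2 := summable_lapterm hg huF x
    have hts : ∑' y, b x y * (v' x - v' y)
        = (∑' y, b x y * (v x - v y)) - ε * ∑' y, b x y * (u x - u y) := by
      rw [← tsum_mul_left, ← Summable.tsum_sub h1 (h2.mul_left ε)]
      refine tsum_congr fun y => ?_
      rw [hv'x, hv'x]
      ring
    simp only [lap]
    rw [hts, hv'x]
    ring
  set w2 : X → ℝ := fun x => lap b c m v' x / v' x with hw2def
  have hw2lap : ∀ x, lap b c m v' x = w2 x * v' x := by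
    intro x
    rw [hw2def]
    exact (div_mul_cancel₀ _ (hv'pos x).ne').symm
  have hwle : ∀ x, w x ≤ w2 x := by
    intro x
    rw [hw2def]
    rw [le_div_iff₀ (hv'pos x)]
    rw [hlapv' x, hvlap x, hv'x]
    have h1 := hulap x
    have h2 := mul_nonneg (hw x) (mul_nonneg hεpos.le (hupos x))
    nlinarith [mul_nonneg hεpos.le (neg_nonneg.mpr h1)]
  have hw2nonneg : ∀ x, 0 ≤ w2 x := fun x => (hw x).trans (hwle x)
  have hH : IsHardy b c m w2 :=
    isHardy_of_positive_solution b c m hg v' w2 hv'F hv'pos hw2nonneg hw2lap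
  have hweq : w2 = w := hcrit.2 w2 hH hwle
  have hlapu : ∀ x, lap b c m u x = w x * u x := by
    intro x
    have h1 : lap b c m v' x = w x * (v x - ε * u x) := by
      rw [← hweq, hw2lap x, hv'x]
    have h2 := hlapv' x
    have h3 := hvlap x
    have h4 : ε * lap b c m u x = ε * (w x * u x) := by linear_combination h2 - h1 + h3
    exact mul_left_cancel₀ hεpos.ne' h4
  have hzero : ∀ x, w x * u x = 0 ∧ lap b c m u x = 0 := by
    intro x
    have h1 := hulap x
    have h2 := hlapu x
    have h3 := mul_nonneg (hw x) (hupos x)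
    constructor <;> linarith
  have hnb : ∀ x, u x = 0 → ∀ y, 0 < b x y → u y = 0 := by
    intro x hx y hby
    have hsum : Summable fun z => b x z * u z := summable_mulF hg.nonneg huF x
    have hT0 : ∑' z, b x z * u z = 0 := by
      have h1 := (hzero x).2
      simp only [lap] at h1
      rw [hx, mul_zero, add_zero] at h1
      have h2 : ∑' z, b x z * (0 - u z) = -∑' z, b x z * u z := by
        rw [← tsum_neg]
        refine tsum_congr fun z => ?_
        ring
      rw [h2] at h1
      have hm := hg.m_pos x
      rcases mul_eq_zero.mp h1 with h | h
      · exact absurd h (by positivity)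
      · linarith
    have hle : b x y * u y ≤ 0 := by
      rw [← hT0]
      exact Summable.le_tsum hsum y fun z _ => mul_nonneg (hg.nonneg x z) (hupos z)
    have heq : b x y * u y = 0 :=
      le_antisymm hle (mul_nonneg (hg.nonneg x y) (hupos y))
    rcases mul_eq_zero.mp heq with h | h
    · exact absurd h hby.ne'
    · exact h
  have hx0 : ∃ x0, w x0 ≠ 0 := by
    by_contra h
    push_neg at h
    exact hnt (funext h)
  obtain ⟨x0, hx0⟩ := hx0
  have hux0 : u x0 = 0 := by
    rcases mul_eq_zero.mp (hzero x0).1 with h | h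
    · exact absurd h hx0
    · exact h
  funext x
  show u x = 0
  obtain ⟨k, p, hp0, hpk, hstep⟩ := hg.connected x0 x
  have key : ∀ i, i ≤ k → u (p i) = 0 := by
    intro i
    induction i with
    | zero => intro _; rw [hp0]; exact hux0
    | succ n ih =>
      intro hle
      have h1 : n < k := Nat.lt_of_succ_le hle
      exact hnb (p n) (ih (le_of_lt h1)) (p (n + 1)) (hstep n h1)
  rw [← hpk]
  exact key k le_rfl


end HG
end
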